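/- Let n ≥ 2, s ≤ n, r₁,…,r_s positive integers with Σ r_j = n, E = { diag(z₁I_{r₁},…,z_sI_{r_s}) } ⊆ ℂ^{n×n}, and π_E : ℂ^{n×n} → ℂ^N the polynomial map whose j-th component is Σ_{I ∈ 𝒥^{|α^j|}_{α^j}} det A_I. Then π_E maps Ω_{μ_E} = { A : μ_E(A) < 1 } into the generalized tetrablock 𝔼_E = { x ∈ ℂ^N : 1 + Σ_j (−1)^{|α^j|} x_j z^{α^j} ≠ 0 ∀ z ∈ 𝔻̄^s }. -/

import Mathlib

open Set Finset Matrix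

/-- The set `A(r₁,…,r_s)` of nonzero multi-indices `α` with `0 ≤ α_j ≤ r_j`. -/
def idxSet (s : ℕ) (r : Fin s → ℕ) : Finset (Fin s → ℕ) :=
  (Fintype.piFinset fun j => Finset.range (r j + 1)).erase 0

/-- The polynomial `R_x(z) = 1 + Σ_{α ∈ A} (−1)^{|α|} x_α z^α`. -/
noncomputable def tetraR (s : ℕ) (r : Fin s → ℕ) (x : idxSet s r → ℂ) (z : Fin s → ℂ) : ℂ :=
  1 + ∑ α : idxSet s r, (-1 : ℂ) ^ (∑ j, (α : Fin s → ℕ) j) * x α *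
    ∏ j, z j ^ (α : Fin s → ℕ) j

/-- The generalized tetrablock `𝔼_E = {x ∈ ℂ^N : R_x(z) ≠ 0 ∀ z ∈ 𝔻̄^s}`. -/
noncomputable def genTetrablock (s : ℕ) (r : Fin s → ℕ) : Set (idxSet s r → ℂ) :=
  {x | ∀ z : Fin s → ℂ, (∀ j, ‖z j‖ ≤ 1) → tetraR s r x z ≠ 0}


/-- The operator norm of a matrix acting on the Euclidean space `ℓ²(Fin n)`. -/
noncomputable def matOpNorm {n : ℕ} (A : Matrix (Fin n) (Fin n) ℂ) : ℝ :=
  ‖(Matrix.toEuclideanCLM (𝕜 := ℂ) A : EuclideanSpace ℂ (Fin n) →L[ℂ] EuclideanSpace ℂ (Fin n))‖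

/-- The space `E = {diag(z₁I_{r₁},…,z_sI_{r_s})}`, encoded via a monotone block map
`b : Fin n → Fin s` whose fiber over `j` has `r j` elements. -/
def scalarBlockDiag {n s : ℕ} (b : Fin n → Fin s) : Set (Matrix (Fin n) (Fin n) ℂ) :=
  {X | ∃ z : Fin s → ℂ, X = Matrix.diagonal fun i => z (b i)}

/-- The structured singular value `μ_E` relative to `E`. -/
noncomputable def muE {n s : ℕ} (b : Fin n → Fin s) (A : Matrix (Fin n) (Fin n) ℂ) : ℝ :=
  (sInf {t : ℝ | ∃ X ∈ scalarBlockDiag b, (1 - A * X).det = 0 ∧ t = matOpNorm X})⁻¹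

/-- The polynomial map `π_E : ℂ^{n×n} → ℂ^N`, whose `α`-th component is
`Σ_{I ∈ 𝒥^{|α|}_α} det A_I`, where `𝒥^{|α|}_α` consists of the index sets taking exactly
`α_j` indices from the `j`-th block. -/
noncomputable def piE (n s : ℕ) (b : Fin n → Fin s) (r : Fin s → ℕ)
    (A : Matrix (Fin n) (Fin n) ℂ) : idxSet s r → ℂ :=
  fun α => ∑ I ∈ Finset.univ.powerset.filter
      (fun I : Finset (Fin n) =>
        ∀ j, (I.filter fun i => b i = j).card = (α : Fin s → ℕ) j),
    (A.submatrix (fun i : I => (i : Fin n)) (fun i : I => (i : Fin n))).det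


lemma det_piecewise_one {n : ℕ} (B : Matrix (Fin n) (Fin n) ℂ) (s : Finset (Fin n)) :
    Matrix.det (Matrix.of (s.piecewise B (1 : Matrix (Fin n) (Fin n) ℂ))) =
      (B.submatrix (fun i : s => (i : Fin n)) (fun i : s => (i : Fin n))).det := by
  classical
  rw [← Matrix.det_submatrix_equiv_self (Equiv.sumCompl (· ∈ s))]
  have hM : (Matrix.of (s.piecewise B (1 : Matrix (Fin n) (Fin n) ℂ))).submatrix
        (Equiv.sumCompl (· ∈ s)) (Equiv.sumCompl (· ∈ s)) =
      Matrix.fromBlocks (B.submatrix (fun i : s => (i : Fin n)) (fun i : s => (i : Fin n)))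
        (B.submatrix (fun i : s => (i : Fin n)) (fun i : {x : Fin n // ¬ x ∈ s} => (i : Fin n)))
        0 (1 : Matrix {x : Fin n // ¬ x ∈ s} {x : Fin n // ¬ x ∈ s} ℂ) := by
    ext i j
    cases i with
    | inl a =>
      cases j with
      | inl a' => simp [Finset.piecewise, a.2]
      | inr c => simp [Finset.piecewise, a.2]
    | inr c =>
      cases j with
      | inl a' =>
        have hne : (c : Fin n) ≠ (a' : Fin n) := fun h => c.2 (h ▸ a'.2)
        simp [Finset.piecewise, c.2, Matrix.one_apply, hne]
      | inr c' =>
        by_cases h : c = c'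
        · subst h
          simp [Finset.piecewise, c.2, Matrix.one_apply]
        · have hne : (c : Fin n) ≠ (c' : Fin n) := fun hx => h (Subtype.ext hx)
          simp [Finset.piecewise, c.2, Matrix.one_apply, hne, h]
  rw [hM, Matrix.det_fromBlocks_zero₂₁, Matrix.det_one, mul_one]

/-- `det (1 + B)` is the sum of all principal minors of `B`. -/
lemma det_one_add_minors {n : ℕ} (B : Matrix (Fin n) (Fin n) ℂ) :
    (1 + B).det = ∑ I : Finset (Fin n),
      (B.submatrix (fun i : I => (i : Fin n)) (fun i : I => (i : Fin n))).det := by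
  classical
  have h := (Matrix.detRowAlternating :
      (Fin n → ℂ) [⋀^Fin n]→ₗ[ℂ] ℂ).toMultilinearMap.map_add_univ
      (Matrix.of.symm B) (Matrix.of.symm (1 : Matrix (Fin n) (Fin n) ℂ))
  calc (1 + B).det
      = (Matrix.detRowAlternating :
          (Fin n → ℂ) [⋀^Fin n]→ₗ[ℂ] ℂ).toMultilinearMap
          (Matrix.of.symm B + Matrix.of.symm (1 : Matrix (Fin n) (Fin n) ℂ)) := by
        rw [add_comm (Matrix.of.symm B)]; rfl
    _ = ∑ I : Finset (Fin n), (Matrix.detRowAlternating :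
          (Fin n → ℂ) [⋀^Fin n]→ₗ[ℂ] ℂ).toMultilinearMap
          (I.piecewise (Matrix.of.symm B) (Matrix.of.symm (1 : Matrix (Fin n) (Fin n) ℂ))) := h
    _ = ∑ I : Finset (Fin n), Matrix.det (Matrix.of (I.piecewise B (1 : Matrix (Fin n) (Fin n) ℂ))) := rfl
    _ = ∑ I : Finset (Fin n),
        (B.submatrix (fun i : I => (i : Fin n)) (fun i : I => (i : Fin n))).det :=
      Finset.sum_congr rfl fun I _ => det_piecewise_one B I


lemma minor_neg_mul_diag {n s : ℕ} (b : Fin n → Fin s) (A : Matrix (Fin n) (Fin n) ℂ)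
    (z : Fin s → ℂ) (I : Finset (Fin n)) :
    ((-(A * Matrix.diagonal fun i => z (b i))).submatrix
        (fun i : I => (i : Fin n)) (fun i : I => (i : Fin n))).det
      = (-1 : ℂ) ^ I.card * (∏ j, z j ^ (I.filter fun i => b i = j).card)
          * (A.submatrix (fun i : I => (i : Fin n)) (fun i : I => (i : Fin n))).det := by
  classical
  have h1 : ((-(A * Matrix.diagonal fun i => z (b i))).submatrix
        (fun i : I => (i : Fin n)) (fun i : I => (i : Fin n)))
      = -((A.submatrix (fun i : I => (i : Fin n)) (fun i : I => (i : Fin n)))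
          * Matrix.diagonal fun i : I => z (b i)) := by
    ext p q
    simp [Matrix.mul_diagonal]
  rw [h1, Matrix.det_neg, Matrix.det_mul, Matrix.det_diagonal, Fintype.card_coe]
  have h2 : (∏ i : I, z (b (i : Fin n))) = ∏ i ∈ I, z (b i) := Finset.prod_coe_sort I (fun i => z (b i))
  have h3 : (∏ i ∈ I, z (b i)) = ∏ j, z j ^ (I.filter fun i => b i = j).card := by
    rw [← Finset.prod_fiberwise_of_maps_to (fun i _ => Finset.mem_univ (b i)) (fun i => z (b i))]
    refine Finset.prod_congr rfl fun j _ => ?_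
    rw [Finset.prod_congr rfl (fun i hi => by
      rw [(Finset.mem_filter.mp hi).2]), Finset.prod_const]
  rw [h2, h3]; ring

lemma det_one_sub_expansion {n s : ℕ} (b : Fin n → Fin s) (A : Matrix (Fin n) (Fin n) ℂ)
    (z : Fin s → ℂ) :
    (1 - A * Matrix.diagonal fun i => z (b i)).det
      = ∑ I : Finset (Fin n), (-1 : ℂ) ^ I.card
          * (∏ j, z j ^ (I.filter fun i => b i = j).card)
          * (A.submatrix (fun i : I => (i : Fin n)) (fun i : I => (i : Fin n))).det := by
  classical
  rw [sub_eq_add_neg, det_one_add_minors]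
  exact Finset.sum_congr rfl fun I _ => minor_neg_mul_diag b A z I

lemma det_eq_tetraR {n s : ℕ} (b : Fin n → Fin s) (r : Fin s → ℕ)
    (hcard : ∀ j, (Finset.univ.filter fun i => b i = j).card = r j)
    (A : Matrix (Fin n) (Fin n) ℂ) (z : Fin s → ℂ) :
    (1 - A * Matrix.diagonal fun i => z (b i)).det = tetraR s r (piE n s b r A) z := by
  classical
  rw [det_one_sub_expansion]
  set g : Finset (Fin n) → (Fin s → ℕ) := fun I j => (I.filter fun i => b i = j).card with hg
  set f : Finset (Fin n) → ℂ := fun I => (-1 : ℂ) ^ I.card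
      * (∏ j, z j ^ (I.filter fun i => b i = j).card)
      * (A.submatrix (fun i : I => (i : Fin n)) (fun i : I => (i : Fin n))).det with hf
  have hmaps : ∀ I ∈ (Finset.univ : Finset (Finset (Fin n))),
      g I ∈ Fintype.piFinset fun j => Finset.range (r j + 1) := by
    intro I _
    rw [Fintype.mem_piFinset]
    intro j
    rw [Finset.mem_range, Nat.lt_succ_iff, ← hcard j]
    exact Finset.card_le_card (Finset.filter_subset_filter _ (Finset.subset_univ I))
  have hcardsum : ∀ I : Finset (Fin n), I.card = ∑ j, g I j := fun I =>
    Finset.card_eq_sum_card_fiberwise (fun i _ => Finset.mem_univ (b i))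
  rw [← Finset.sum_fiberwise_of_maps_to hmaps f]
  have h0mem : (0 : Fin s → ℕ) ∈ Fintype.piFinset fun j => Finset.range (r j + 1) := by
    rw [Fintype.mem_piFinset]; intro j; simp
  rw [← Finset.add_sum_erase _ _ h0mem]
  have hfiber0 : Finset.univ.filter (fun I => g I = 0) = {(∅ : Finset (Fin n))} := by
    ext I
    simp only [Finset.mem_filter, Finset.mem_univ, true_and, Finset.mem_singleton]
    constructor
    · intro h
      rw [← Finset.card_eq_zero, hcardsum I, h]
      simp
    · rintro rfl
      funext j
      simp [hg]
  have hterm0 : ∑ I ∈ Finset.univ.filter (fun I => g I = 0), f I = 1 := by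
    rw [hfiber0, Finset.sum_singleton, hf]
    haveI : IsEmpty ((∅ : Finset (Fin n)) : Type) := Finset.isEmpty_coe_sort.mpr rfl
    simp [Matrix.det_isEmpty]
  rw [hterm0, tetraR]
  congr 1
  have hsum2 : ∑ α : idxSet s r, (-1 : ℂ) ^ (∑ j, (α : Fin s → ℕ) j) * piE n s b r A α *
      ∏ j, z j ^ (α : Fin s → ℕ) j
      = ∑ β ∈ idxSet s r, (-1 : ℂ) ^ (∑ j, β j)
          * (∑ I ∈ Finset.univ.powerset.filter
              (fun I : Finset (Fin n) => ∀ j, (I.filter fun i => b i = j).card = β j),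
            (A.submatrix (fun i : I => (i : Fin n)) (fun i : I => (i : Fin n))).det)
          * ∏ j, z j ^ β j := by
    exact Finset.sum_coe_sort (idxSet s r) (fun β => (-1 : ℂ) ^ (∑ j, β j)
          * (∑ I ∈ Finset.univ.powerset.filter
              (fun I : Finset (Fin n) => ∀ j, (I.filter fun i => b i = j).card = β j),
            (A.submatrix (fun i : I => (i : Fin n)) (fun i : I => (i : Fin n))).det)
          * ∏ j, z j ^ β j)
  rw [hsum2]
  refine Finset.sum_congr rfl fun β hβ => ?_
  have hfib : Finset.univ.powerset.filter
      (fun I : Finset (Fin n) => ∀ j, (I.filter fun i => b i = j).card = β j)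
      = Finset.univ.filter (fun I => g I = β) := by
    rw [Finset.powerset_univ]
    refine Finset.filter_congr fun I _ => ?_
    simp [hg, funext_iff]
  rw [hfib]
  rw [Finset.mul_sum, Finset.sum_mul]
  refine (Finset.sum_congr rfl fun I hI => ?_).symm
  have hgI : g I = β := (Finset.mem_filter.mp hI).2
  simp only [hf]
  have h1 : I.card = ∑ j, β j := by rw [hcardsum I, hgI]
  have h2 : (∏ j, z j ^ (I.filter fun i => b i = j).card) = ∏ j, z j ^ β j := by
    refine Finset.prod_congr rfl fun j _ => ?_
    rw [show (I.filter fun i => b i = j).card = β j from congrFun hgI j]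
  rw [h1, h2]; ring

lemma matOpNorm_nonneg {n : ℕ} (A : Matrix (Fin n) (Fin n) ℂ) : 0 ≤ matOpNorm A :=
  norm_nonneg _

lemma matOpNorm_diagonal_le {n : ℕ} (d : Fin n → ℂ) (hd : ∀ i, ‖d i‖ ≤ 1) :
    matOpNorm (Matrix.diagonal d) ≤ 1 := by
  refine ContinuousLinearMap.opNorm_le_bound _ zero_le_one fun x => ?_
  rw [one_mul]
  have happ : ∀ i, (Matrix.toEuclideanCLM (𝕜 := ℂ) (Matrix.diagonal d) x) i = d i * x i := by
    intro i
    have := Matrix.ofLp_toEuclideanCLM (𝕜 := ℂ) (Matrix.diagonal d) x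
    have h2 := congrFun this i
    simpa [Matrix.toLin'_apply, Matrix.mulVec_diagonal] using h2
  rw [EuclideanSpace.norm_eq, EuclideanSpace.norm_eq]
  apply Real.sqrt_le_sqrt
  refine Finset.sum_le_sum fun i _ => ?_
  rw [happ i]
  have h1 : ‖d i * x i‖ ≤ ‖x i‖ := by
    rw [norm_mul]
    have : ‖d i‖ ≤ 1 := by exact hd i
    nlinarith [norm_nonneg (x i), norm_nonneg (d i)]
  nlinarith [norm_nonneg (d i * x i), norm_nonneg (x i)]

lemma det_one_sub_ne_zero {n : ℕ} (A X : Matrix (Fin n) (Fin n) ℂ)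
    (h : matOpNorm A * matOpNorm X < 1) : (1 - A * X).det ≠ 0 := by
  have hT : ‖(Matrix.toEuclideanCLM (𝕜 := ℂ) A) * (Matrix.toEuclideanCLM (𝕜 := ℂ) X)‖ < 1 :=
    lt_of_le_of_lt (norm_mul_le _ _) h
  have hU : IsUnit (1 - (Matrix.toEuclideanCLM (𝕜 := ℂ) A) * (Matrix.toEuclideanCLM (𝕜 := ℂ) X)) :=
    (Units.oneSub _ hT).isUnit
  have hU2 : IsUnit (Matrix.toEuclideanCLM (𝕜 := ℂ) (1 - A * X)) := by
    rw [map_sub, _root_.map_one, _root_.map_mul]; exact hU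
  have hUnit : IsUnit (1 - A * X) := by
    have h3 := hU2.map (Matrix.toEuclideanCLM (n := Fin n) (𝕜 := ℂ)).symm
    simpa using h3
  have := (Matrix.isUnit_iff_isUnit_det _).mp hUnit
  exact this.ne_zero

/-- `π_E` maps `Ω_{μ_E} = {μ_E < 1}` into the generalized tetrablock `𝔼_E`. -/
theorem piE_maps_omega_into_genTetrablock
    (n s : ℕ) (hn : 2 ≤ n) (hs : s ≤ n)
    (r : Fin s → ℕ) (hr : ∀ j, 1 ≤ r j) (hsum : ∑ j, r j = n)
    (b : Fin n → Fin s) (hb : Monotone b)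
    (hcard : ∀ j, (Finset.univ.filter fun i => b i = j).card = r j) :
    ∀ A : Matrix (Fin n) (Fin n) ℂ, muE b A < 1 → piE n s b r A ∈ genTetrablock s r := by
  intro A hA
  rw [genTetrablock, Set.mem_setOf_eq]
  intro z hz heq0
  set D : Matrix (Fin n) (Fin n) ℂ := Matrix.diagonal fun i => z (b i) with hD
  have hdet0 : (1 - A * D).det = 0 := by
    rw [hD, det_eq_tetraR b r hcard A z]; exact heq0
  set S : Set ℝ := {t : ℝ | ∃ X ∈ scalarBlockDiag b, (1 - A * X).det = 0 ∧ t = matOpNorm X}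
    with hS
  have hmem : matOpNorm D ∈ S := ⟨D, ⟨z, rfl⟩, hdet0, rfl⟩
  have h0 : (0 : ℝ) < matOpNorm A + 1 := by
    have := matOpNorm_nonneg A; linarith
  have hlb : ∀ t ∈ S, (matOpNorm A + 1)⁻¹ ≤ t := by
    rintro t ⟨X, _, hdet, rfl⟩
    by_contra hlt
    push_neg at hlt
    refine det_one_sub_ne_zero A X ?_ hdet
    calc matOpNorm A * matOpNorm X
        ≤ matOpNorm A * (matOpNorm A + 1)⁻¹ :=
          mul_le_mul_of_nonneg_left hlt.le (matOpNorm_nonneg A)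
      _ < 1 := by
          rw [← div_eq_mul_inv, div_lt_one h0]; linarith
  have hpos : 0 < sInf S := lt_of_lt_of_le (inv_pos.mpr h0) (le_csInf ⟨_, hmem⟩ hlb)
  have hle1 : sInf S ≤ 1 := le_trans (csInf_le ⟨_, hlb⟩ hmem) (matOpNorm_diagonal_le _ fun i => hz (b i))
  have hge1 : 1 ≤ (sInf S)⁻¹ := one_le_inv_iff₀.mpr ⟨hpos, hle1⟩
  have : muE b A = (sInf S)⁻¹ := rfl
  rw [this] at hA
  linarith
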